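/- Let G be a group and H a subgroup. The subgroup topology G^H (generated by left cosets of subgroups containing H) makes G a topological group if and only if H is a normal subgroup of G. -/

import Mathlib

open Pointwise Topology

/-- The subgroup topology on `G` determined by a collection `F` of subgroups:
generated by all left cosets of members of `F`. -/
def subgroupTopology {G : Type*} [Group G] (F : Set (Subgroup G)) : TopologicalSpace G :=
  TopologicalSpace.generateFrom {s | ∃ (g : G) (K : Subgroup G), K ∈ F ∧ s = g • (K : Set G)}

/-- A collection of subgroups is a neighbourhood family if any two members
contain a common member. -/
def IsNeighbourhoodFamily {G : Type*} [Group G] (F : Set (Subgroup G)) : Prop :=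
  ∀ K₁ ∈ F, ∀ K₂ ∈ F, ∃ S ∈ F, S ≤ K₁ ⊓ K₂

/-- The subgroup topology `G^H` determined by a subgroup `H`: generated by all
left cosets of subgroups containing `H`. -/
def subgroupTopologyOf {G : Type*} [Group G] (H : Subgroup G) : TopologicalSpace G :=
  subgroupTopology {K | H ≤ K}

section Aux

variable {G : Type*} [Group G]

lemma aux_isOpen_coset (H : Subgroup G) {K : Subgroup G} (hK : H ≤ K) (g : G) :
    IsOpen[subgroupTopologyOf H] (g • (K : Set G)) :=
  TopologicalSpace.GenerateOpen.basic _ ⟨g, K, hK, rfl⟩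

lemma aux_exists_coset_subset (H : Subgroup G) {U : Set G}
    (hU : IsOpen[subgroupTopologyOf H] U) {x : G} (hx : x ∈ U) :
    ∃ K : Subgroup G, H ≤ K ∧ x • (K : Set G) ⊆ U := by
  induction hU with
  | basic s hs =>
    obtain ⟨g, K, hK, rfl⟩ := hs
    refine ⟨K, hK, ?_⟩
    rintro y hy
    rw [Set.mem_smul_set_iff_inv_smul_mem, smul_eq_mul] at hx hy ⊢
    have := mul_mem hx hy
    simpa [mul_assoc] using this
  | univ => exact ⟨⊤, le_top, by simp⟩
  | inter u v hu hv ihu ihv =>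
    obtain ⟨K₁, h1, s1⟩ := ihu hx.1
    obtain ⟨K₂, h2, s2⟩ := ihv hx.2
    refine ⟨K₁ ⊓ K₂, le_inf h1 h2, ?_⟩
    rintro y hy
    rw [Set.mem_smul_set_iff_inv_smul_mem] at hy
    exact ⟨s1 (by rw [Set.mem_smul_set_iff_inv_smul_mem]; exact hy.1),
           s2 (by rw [Set.mem_smul_set_iff_inv_smul_mem]; exact hy.2)⟩
  | sUnion S hS ih =>
    obtain ⟨t, ht, hxt⟩ := hx
    obtain ⟨K, hK, hs⟩ := ih t ht hxt
    exact ⟨K, hK, hs.trans (Set.subset_sUnion_of_mem ht)⟩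

lemma aux_conj_le {H : Subgroup G} (hN : H.Normal) {K : Subgroup G} (hK : H ≤ K) (b : G) :
    H ≤ K.map (MulAut.conj b).toMonoidHom := by
  intro h hh
  rw [Subgroup.mem_map_equiv]
  have : b⁻¹ * h * b ∈ H := by simpa using hN.conj_mem h hh b⁻¹
  simpa [MulAut.conj] using hK this

lemma aux_mem_conj_map {K : Subgroup G} {b x : G} :
    x ∈ K.map (MulAut.conj b).toMonoidHom ↔ b⁻¹ * x * b ∈ K := by
  rw [Subgroup.mem_map_equiv]
  simp [MulAut.conj]

end Aux

theorem subgroupTopologyOf_topologicalGroup_iff_normal {G : Type*} [Group G] (H : Subgroup G) :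
    @IsTopologicalGroup G (subgroupTopologyOf H) _ ↔ H.Normal := by
  constructor
  · intro hTG
    letI := subgroupTopologyOf H
    haveI := hTG
    constructor
    intro n hn g
    have hc : Continuous fun x : G => g * x * g⁻¹ :=
      (continuous_mul_right g⁻¹).comp (continuous_mul_left g)
    have hopen : IsOpen ((fun x : G => g * x * g⁻¹) ⁻¹' ((1 : G) • (H : Set G))) :=
      (aux_isOpen_coset H le_rfl 1).preimage hc
    have h1 : (1 : G) ∈ (fun x : G => g * x * g⁻¹) ⁻¹' ((1 : G) • (H : Set G)) := by
      simp [Set.mem_smul_set_iff_inv_smul_mem, H.one_mem]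
    obtain ⟨K, hK, hsub⟩ := aux_exists_coset_subset H hopen h1
    have hnK : n ∈ (1 : G) • (K : Set G) := by
      simp [Set.mem_smul_set_iff_inv_smul_mem]
      exact hK hn
    have := hsub hnK
    simpa [Set.mem_smul_set_iff_inv_smul_mem] using this
  · intro hN
    letI := subgroupTopologyOf H
    refine { continuous_mul := ?_, continuous_inv := ?_ }
    · apply continuous_generateFrom_iff.mpr
      rintro s ⟨g, K, hK, rfl⟩
      rw [isOpen_prod_iff]
      rintro a b hab
      rw [Set.mem_preimage, Set.mem_smul_set_iff_inv_smul_mem, smul_eq_mul] at hab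
      refine ⟨a • ((K.map (MulAut.conj b).toMonoidHom : Subgroup G) : Set G),
        b • (K : Set G), aux_isOpen_coset H (aux_conj_le hN hK b) a,
        aux_isOpen_coset H hK b, ?_, ?_, ?_⟩
      · rw [Set.mem_smul_set_iff_inv_smul_mem, smul_eq_mul, inv_mul_cancel]
        exact Subgroup.one_mem _
      · rw [Set.mem_smul_set_iff_inv_smul_mem, smul_eq_mul, inv_mul_cancel]
        exact Subgroup.one_mem _
      · rintro ⟨x, y⟩ ⟨hx, hy⟩
        rw [Set.mem_smul_set_iff_inv_smul_mem, smul_eq_mul] at hx hy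
        rw [SetLike.mem_coe, aux_mem_conj_map] at hx
        rw [SetLike.mem_coe] at hy
        simp only [Set.mem_preimage]
        rw [Set.mem_smul_set_iff_inv_smul_mem, smul_eq_mul, SetLike.mem_coe]
        have key : g⁻¹ * (x * y) = (g⁻¹ * (a * b)) * (b⁻¹ * (a⁻¹ * x) * b) * (b⁻¹ * y) := by
          group
        rw [key]
        exact mul_mem (mul_mem hab hx) hy
    · apply continuous_generateFrom_iff.mpr
      rintro s ⟨g, K, hK, rfl⟩
      have : (fun a : G => a⁻¹) ⁻¹' (g • (K : Set G)) =
          g⁻¹ • ((K.map (MulAut.conj g).toMonoidHom : Subgroup G) : Set G) := by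
        ext x
        rw [Set.mem_preimage, Set.mem_smul_set_iff_inv_smul_mem, smul_eq_mul,
          Set.mem_smul_set_iff_inv_smul_mem, smul_eq_mul, SetLike.mem_coe, SetLike.mem_coe,
          aux_mem_conj_map, ← K.inv_mem_iff]
        constructor <;> intro h <;> [skip; skip] <;>
          · convert h using 1; group
      rw [this]
      exact aux_isOpen_coset H (aux_conj_le hN hK g) g⁻¹
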